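/- Let X ⊂ ℂ^m be an unbounded pure k-dimensional complex algebraic set, let W ⊂ ℂ^m be an (m−k)-dimensional complex vector subspace with W ∩ C_{3,∞}(X) = {0}, write ℂ^m = V × W with V the orthogonal complement of W and coordinates y = (y₁,…,y_{m−k}) on W, set Wⁱ := {(0,y) ∈ ℂ^m : y_i = 0} and let π_i : ℂ^m → ℂ^{k+1} be the projection π_i(x,y) = (x, y_i). If C_{5,∞}(X) ∩ Wⁱ = {0}, then there exists a sufficiently large R > 0 such that the restriction of π_i to X \ B̄_R is injective, where B̄_R is the closed ball of radius R centered at the origin of ℂ^m. -/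

import Mathlib

open Filter Topology Metric

noncomputable section

/-- `ℂ^m` with its Euclidean (Hermitian) structure. -/
abbrev Em (m : ℕ) := EuclideanSpace ℂ (Fin m)

/-- Evaluation of a multivariate polynomial at a point of `ℂ^m`. -/
def pev {m : ℕ} (f : MvPolynomial (Fin m) ℂ) (x : Em m) : ℂ :=
  MvPolynomial.eval (fun i => x i) f

/-- A (complex, affine) algebraic subset of `ℂ^m`: the common zero locus of a
family of complex polynomials. -/
def IsAlgSet {m : ℕ} (X : Set (Em m)) : Prop :=
  ∃ S : Set (MvPolynomial (Fin m) ℂ), X = {x | ∀ f ∈ S, pev f x = 0}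

/-- An irreducible algebraic subset of `ℂ^m`. -/
def IsIrredAlgSet {m : ℕ} (Z : Set (Em m)) : Prop :=
  IsAlgSet Z ∧ Z.Nonempty ∧
    ∀ Y₁ Y₂ : Set (Em m), IsAlgSet Y₁ → IsAlgSet Y₂ → Z ⊆ Y₁ ∪ Y₂ → Z ⊆ Y₁ ∨ Z ⊆ Y₂

/-- An irreducible component of `X`: a maximal irreducible algebraic subset of `X`. -/
def IsIrredComponent {m : ℕ} (X Z : Set (Em m)) : Prop :=
  IsIrredAlgSet Z ∧ Z ⊆ X ∧ ∀ Z', IsIrredAlgSet Z' → Z' ⊆ X → Z ⊆ Z' → Z = Z'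

/-- The (complex) dimension of an algebraic subset of `ℂ^m`, as the Krull dimension of
the poset of irreducible algebraic subsets contained in it (for complex algebraic
sets this coincides with the complex dimension). -/
def algDim {m : ℕ} (X : Set (Em m)) : WithBot ℕ∞ :=
  Order.krullDim {Z : Set (Em m) // IsIrredAlgSet Z ∧ Z ⊆ X}

/-- `X` is of pure dimension `k`: every irreducible component has dimension `k`. -/
def IsPureDim {m : ℕ} (X : Set (Em m)) (k : ℕ) : Prop :=
  X.Nonempty ∧ ∀ Z, IsIrredComponent X Z → algDim Z = (k : WithBot ℕ∞)

/-- The Zariski tangent space of `X` at `p`: the joint kernel of the differentials at `p`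
of all polynomials vanishing identically on `X`.  At a smooth point of `X` this is the
usual tangent space `T_p X`. -/
def zTangent {m : ℕ} (X : Set (Em m)) (p : Em m) : Submodule ℂ (Em m) :=
  ⨅ f ∈ {f : MvPolynomial (Fin m) ℂ | ∀ x ∈ X, pev f x = 0},
    LinearMap.ker ((fderiv ℂ (pev f) p : Em m →L[ℂ] ℂ) : Em m →ₗ[ℂ] ℂ)

/-- The singular locus of a pure `k`-dimensional algebraic set `X`: the points of `X`
where the Zariski tangent space does not have dimension `k`. -/
def singLocus {m : ℕ} (X : Set (Em m)) (k : ℕ) : Set (Em m) :=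
  {p ∈ X | Module.finrank ℂ (zTangent X p) ≠ k}

/-- The Whitney tangent cone at infinity `C_{3,∞}(X)`. -/
def C3Inf {m : ℕ} (X : Set (Em m)) : Set (Em m) :=
  {v | ∃ (p : ℕ → Em m) (t : ℕ → ℂ), (∀ j, p j ∈ X) ∧
    Tendsto (fun j => ‖p j‖) atTop atTop ∧ Tendsto (fun j => t j • p j) atTop (𝓝 v)}

/-- The Whitney tangent cone at infinity `C_{4,∞}(X)` (for `X` pure `k`-dimensional). -/
def C4Inf {m : ℕ} (X : Set (Em m)) (k : ℕ) : Set (Em m) :=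
  {v | ∃ (p w : ℕ → Em m), (∀ j, p j ∈ X \ singLocus X k) ∧
    (∀ j, w j ∈ zTangent X (p j)) ∧
    Tendsto (fun j => ‖p j‖) atTop atTop ∧ Tendsto w atTop (𝓝 v)}

/-- The Whitney tangent cone at infinity `C_{5,∞}(X)`. -/
def C5Inf {m : ℕ} (X : Set (Em m)) : Set (Em m) :=
  {v | ∃ (p q : ℕ → Em m) (t : ℕ → ℂ), (∀ j, p j ∈ X) ∧ (∀ j, q j ∈ X) ∧
    Tendsto (fun j => ‖p j‖) atTop atTop ∧ Tendsto (fun j => ‖q j‖) atTop atTop ∧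
    Tendsto (fun j => t j • (p j - q j)) atTop (𝓝 v)}


/-- Let `X ⊆ ℂ^m` be an unbounded pure `k`-dimensional complex algebraic
set, `W` an `(m-k)`-dimensional complex subspace with `W ∩ C_{3,∞}(X) = {0}`, with
`V = Wᗮ`; fix orthogonal coordinates `e₁ : V ≃ ℂ^k`, `e₂ : W ≃ ℂ^{m-k}`, let
`Wⁱ = {(0, y) : yᵢ = 0}` and `πᵢ(x, y) = (x, yᵢ) : ℂ^m → ℂ^{k+1}`.
If `C_{5,∞}(X) ∩ Wⁱ = {0}`, then there is `R > 0` such that `πᵢ` is injective on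
`X \ B̄_R`. -/
theorem proj_i_injective_outside_ball {m k : ℕ} (X : Set (Em m))
    (hX : IsAlgSet X) (hpure : IsPureDim X k) (hub : ¬ Bornology.IsBounded X)
    (W : Submodule ℂ (Em m)) (hW : Module.finrank ℂ W = m - k)
    (htrans : (W : Set (Em m)) ∩ C3Inf X = {0})
    (e₁ : Wᗮ ≃ₗᵢ[ℂ] EuclideanSpace ℂ (Fin k))
    (e₂ : W ≃ₗᵢ[ℂ] EuclideanSpace ℂ (Fin (m - k)))
    (i : Fin (m - k))
    (πi : Em m → Em (k + 1))
    (hπi : πi = fun z => (WithLp.toLp 2 (Fin.snoc (α := fun _ => ℂ) (WithLp.ofLp (e₁ ((Wᗮ).orthogonalProjectionOnto z)))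
      (e₂ (W.orthogonalProjectionOnto z) i)) : Em (k + 1)))
    (Wi : Set (Em m))
    (hWidef : Wi = {z : Em m | z ∈ W ∧ e₂ (W.orthogonalProjectionOnto z) i = 0})
    (hC5Wi : C5Inf X ∩ Wi = {0}) :
    ∃ R : ℝ, 0 < R ∧ Set.InjOn πi (X \ Metric.closedBall 0 R) := by
  by_contra hcon
  push_neg at hcon
  -- extract bad pairs for each radius
  have key : ∀ j : ℕ, ∃ pq : Em m × Em m, pq.1 ∈ X ∧ pq.2 ∈ X ∧
      (j : ℝ) < ‖pq.1‖ ∧ (j : ℝ) < ‖pq.2‖ ∧ πi pq.1 = πi pq.2 ∧ pq.1 ≠ pq.2 := by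
    intro j
    have h := hcon (j + 1) (by positivity)
    rw [Set.InjOn] at h
    push_neg at h
    obtain ⟨p, hp, q, hq, hpq, hne⟩ := h
    simp only [Set.mem_diff, Metric.mem_closedBall, dist_zero_right, not_le] at hp hq
    exact ⟨(p, q), hp.1, hq.1, by linarith [hp.2], by linarith [hq.2], hpq, hne⟩
  choose pq hpX hqX hpn hqn hpiq hne using key
  set p : ℕ → Em m := fun j => (pq j).1 with hp_def
  set q : ℕ → Em m := fun j => (pq j).2 with hq_def
  set d : ℕ → Em m := fun j => p j - q j with hd_def
  have hd0 : ∀ j, d j ≠ 0 := fun j => sub_ne_zero.mpr (hne j)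
  set t : ℕ → ℂ := fun j => ((‖d j‖⁻¹ : ℝ) : ℂ) with ht_def
  set u : ℕ → Em m := fun j => t j • d j with hu_def
  have hut : ∀ j, ‖u j‖ = 1 := by
    intro j
    have : ‖d j‖ ≠ 0 := norm_ne_zero_iff.mpr (hd0 j)
    simp [hu_def, ht_def, norm_smul, abs_of_nonneg (inv_nonneg.mpr (norm_nonneg (d j))),
      inv_mul_cancel₀ this]
  -- difference lies in Wi
  have hdW : ∀ j, (d j ∈ W ∧ e₂ (W.orthogonalProjectionOnto (d j)) i = 0) := by
    intro j
    have hpq := hpiq j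
    rw [hπi] at hpq
    have h2 : e₂ (W.orthogonalProjectionOnto (p j)) i = e₂ (W.orthogonalProjectionOnto (q j)) i := by
      have := congrArg (fun x : Em (k + 1) => x (Fin.last k)) hpq
      simpa [Fin.snoc_last] using this
    have h1 : e₁ ((Wᗮ).orthogonalProjectionOnto (p j)) = e₁ ((Wᗮ).orthogonalProjectionOnto (q j)) := by
      ext l
      have := congrArg (fun x : Em (k + 1) => x (Fin.castSucc l)) hpq
      simpa [Fin.snoc_castSucc] using this
    have h1' : (Wᗮ).orthogonalProjectionOnto (p j) = (Wᗮ).orthogonalProjectionOnto (q j) :=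
      e₁.injective h1
    have hdWmem : d j ∈ W := by
      have hz : (Wᗮ).orthogonalProjectionOnto (d j) = 0 := by
        rw [hd_def]
        simp only [map_sub, h1', sub_self]
      have : d j ∈ Wᗮᗮ := by
        rwa [Submodule.orthogonalProjectionOnto_eq_zero_iff] at hz
      rwa [Submodule.orthogonal_orthogonal] at this
    refine ⟨hdWmem, ?_⟩
    have : W.orthogonalProjectionOnto (d j) =
        W.orthogonalProjectionOnto (p j) - W.orthogonalProjectionOnto (q j) := by
      rw [hd_def]; simp [map_sub]
    rw [this, map_sub]
    simp only [PiLp.sub_apply, h2, sub_self]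
  have huWi : ∀ j, u j ∈ Wi := by
    intro j
    rw [hWidef]
    refine ⟨W.smul_mem (t j) (hdW j).1, ?_⟩
    have : W.orthogonalProjectionOnto (u j) = t j • W.orthogonalProjectionOnto (d j) := by
      rw [hu_def]; simp [map_smul]
    rw [this, map_smul]
    simp [PiLp.smul_apply, (hdW j).2]
  -- extract convergent subsequence on the unit sphere
  have husph : ∀ j, u j ∈ Metric.sphere (0 : Em m) 1 := by
    intro j; simp [Metric.mem_sphere, dist_zero_right, hut j]
  obtain ⟨v, hv, φ, hφ, hconv⟩ :=
    (isCompact_sphere (0 : Em m) 1).tendsto_subseq husph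
  have hφle : ∀ j : ℕ, (j : ℝ) ≤ (φ j : ℝ) := fun j => Nat.cast_le.mpr (hφ.le_apply)
  have hφtop : Tendsto (fun j => ((φ j : ℕ) : ℝ)) atTop atTop :=
    tendsto_natCast_atTop_atTop.comp hφ.tendsto_atTop
  have hpn' : Tendsto (fun j => ‖p (φ j)‖) atTop atTop :=
    tendsto_atTop_mono (fun j => (hpn (φ j)).le) hφtop
  have hqn' : Tendsto (fun j => ‖q (φ j)‖) atTop atTop :=
    tendsto_atTop_mono (fun j => (hqn (φ j)).le) hφtop
  -- v belongs to C5Inf X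
  have hvC5 : v ∈ C5Inf X := by
    refine ⟨fun j => p (φ j), fun j => q (φ j), fun j => t (φ j),
      fun j => hpX (φ j), fun j => hqX (φ j), hpn', hqn', ?_⟩
    exact hconv
  -- v belongs to Wi
  have hvWi : v ∈ Wi := by
    rw [hWidef]
    constructor
    · have hWclosed : IsClosed (W : Set (Em m)) := Submodule.closed_of_finiteDimensional W
      exact hWclosed.mem_of_tendsto hconv
        (Filter.Eventually.of_forall fun j => by
          have := huWi (φ j); rw [hWidef] at this; exact this.1)
    · set g : Em m → ℂ := fun z => e₂ (W.orthogonalProjectionOnto z) i with hg_def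
      have hgcont : Continuous g := by
        have : g = fun z => (EuclideanSpace.proj i) (e₂ (W.orthogonalProjectionOnto z)) := rfl
        rw [this]
        exact (EuclideanSpace.proj i).continuous.comp
          (e₂.continuous.comp W.orthogonalProjectionOnto.continuous)
      have h0 : Tendsto (fun j => g (u (φ j))) atTop (𝓝 (g v)) :=
        (hgcont.tendsto v).comp hconv
      have h0' : (fun j => g (u (φ j))) = fun _ => (0 : ℂ) := by
        funext j
        have := huWi (φ j); rw [hWidef] at this; exact this.2
      rw [h0'] at h0
      exact tendsto_nhds_unique h0 tendsto_const_nhds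
  have hv0 : v = 0 := by
    have : v ∈ C5Inf X ∩ Wi := ⟨hvC5, hvWi⟩
    rw [hC5Wi] at this
    exact this
  have : ‖v‖ = 1 := by simpa [dist_zero_right] using hv
  rw [hv0] at this
  simp at this


end
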